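/- Let A be a finite set, θ : A → ℝ, π the softmax of θ, a₀ ∈ A, θ'(a₀) = θ(a₀) - log(1/π(a₀)), θ'(a) = θ(a) for a ≠ a₀, and π' the softmax of θ'. Then for every a ≠ a₀, π'(a) - π(a) = (π(a₀)·(1 - π(a₀)) / (π(a₀)² - π(a₀) + 1))·π(a). -/

import Mathlib

theorem stmt_8 {A : Type*} [Fintype A] (θ θ' π π' : A → ℝ) (a₀ : A)
    (hπ : ∀ a, π a = Real.exp (θ a) / ∑ a', Real.exp (θ a'))
    (hθ'0 : θ' a₀ = θ a₀ - Real.log (1 / π a₀))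
    (hθ' : ∀ a ≠ a₀, θ' a = θ a)
    (hπ' : ∀ a, π' a = Real.exp (θ' a) / ∑ a', Real.exp (θ' a')) :
    ∀ a ≠ a₀, π' a - π a = (π a₀ * (1 - π a₀) / ((π a₀) ^ 2 - π a₀ + 1)) * π a := by
  classical
  intro a ha
  have hS : 0 < ∑ a', Real.exp (θ a') :=
    Finset.sum_pos (fun _ _ => Real.exp_pos _) ⟨a₀, Finset.mem_univ _⟩
  have hπ0 : 0 < π a₀ := by rw [hπ]; positivity
  have hexpθ0 : Real.exp (θ a₀) = (∑ a', Real.exp (θ a')) * π a₀ := by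
    rw [hπ]; field_simp
  have hexp' : Real.exp (θ' a₀) = Real.exp (θ a₀) * π a₀ := by
    rw [hθ'0, one_div, Real.log_inv, sub_neg_eq_add, Real.exp_add,
      Real.exp_log hπ0]
  have hsum' : ∀ a' ∈ Finset.univ \ {a₀}, Real.exp (θ' a') = Real.exp (θ a') := by
    intro a' ha'
    simp only [Finset.mem_sdiff, Finset.mem_singleton] at ha'
    rw [hθ' a' ha'.2]
  have hD : 0 < π a₀ ^ 2 - π a₀ + 1 := by nlinarith [sq_nonneg (π a₀ - 1)]
  have hS' : ∑ a', Real.exp (θ' a')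
      = (∑ a', Real.exp (θ a')) * (π a₀ ^ 2 - π a₀ + 1) := by
    have hsplit : (∑ a', Real.exp (θ a'))
        = (∑ a' ∈ Finset.univ \ {a₀}, Real.exp (θ a')) + Real.exp (θ a₀) := by
      rw [← Finset.sum_sdiff (Finset.subset_univ {a₀}) (f := fun a' => Real.exp (θ a')),
        Finset.sum_singleton]
    rw [← Finset.sum_sdiff (Finset.subset_univ {a₀}) (f := fun a' => Real.exp (θ' a')),
      Finset.sum_congr rfl hsum', Finset.sum_singleton, hexp', hexpθ0]
    linarith [hsplit, hexpθ0]
  rw [hπ' a, hθ' a ha, hS', hπ a]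
  generalize π a₀ = p at hD ⊢
  generalize (∑ a', Real.exp (θ a')) = S at hS ⊢
  have hSne := hS.ne'
  have hDne := hD.ne'
  rw [div_mul_div_comm, div_sub_div _ _ (mul_ne_zero hSne hDne) hSne,
    div_eq_div_iff (mul_ne_zero (mul_ne_zero hSne hDne) hSne) (mul_ne_zero hDne hSne)]
  ring
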